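/- Define u(x,t) = −(2√3/3) sech(2x − 8t − ln(√3/2)) and v(x,t) = −(2√6/3) sech(2x − 8t − ln(√3/2)), where sech(y) = 1/cosh(y). Then for all (x,t) ∈ ℝ², the pair (u,v) satisfies the coupled mKdV system with α = −1: u_t + u_{xxx} + 3(u_x v² + u v v_x + 2u² u_x) = 0 and v_t + v_{xxx} + 3(u² v_x + u u_x v + 2v² v_x) = 0. -/

import Mathlib

/-- The line soliton `u(x,t) = −(2√3/3) sech(2x − 8t − ln(√3/2))`. -/
noncomputable def usol (x t : ℝ) : ℝ :=
  -(2 * Real.sqrt 3 / 3) * (1 / Real.cosh (2 * x - 8 * t - Real.log (Real.sqrt 3 / 2)))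

/-- The line soliton `v(x,t) = −(2√6/3) sech(2x − 8t − ln(√3/2))`. -/
noncomputable def vsol (x t : ℝ) : ℝ :=
  -(2 * Real.sqrt 6 / 3) * (1 / Real.cosh (2 * x - 8 * t - Real.log (Real.sqrt 3 / 2)))

open Real

section aux
variable (a c y : ℝ)

private lemma hw' : HasDerivAt (fun y : ℝ => 2*y - c) 2 y := by
  simpa using ((hasDerivAt_id y).const_mul 2).sub_const c

private lemma hch' : HasDerivAt (fun y : ℝ => Real.cosh (2*y - c)) (2 * Real.sinh (2*y-c)) y := by
  simpa [mul_comm, Function.comp_def] using (Real.hasDerivAt_cosh _).comp y (hw' c y)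

private lemma hsh' : HasDerivAt (fun y : ℝ => Real.sinh (2*y - c)) (2 * Real.cosh (2*y-c)) y := by
  simpa [mul_comm, Function.comp_def] using (Real.hasDerivAt_sinh _).comp y (hw' c y)

private lemma hc0' : Real.cosh (2*y - c) ≠ 0 := (Real.cosh_pos _).ne'

lemma haux0 :
    HasDerivAt (fun y : ℝ => a * (1 / Real.cosh (2*y - c)))
      (a * (-2 * Real.sinh (2*y-c) / Real.cosh (2*y-c)^2)) y := by
  have := ((hch' c y).inv (hc0' c y)).const_mul a
  convert this using 1
  · rfl
  · rfl
  · funext z; simp only [one_div, Pi.inv_apply]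
  ring

lemma haux1 :
    HasDerivAt (fun y : ℝ => a * (-2 * Real.sinh (2*y-c) / Real.cosh (2*y-c)^2))
      (a * ((8 * Real.sinh (2*y-c)^2 - 4 * Real.cosh (2*y-c)^2) / Real.cosh (2*y-c)^3)) y := by
  have hnum : HasDerivAt (fun y : ℝ => -2 * Real.sinh (2*y-c))
      (-2 * (2 * Real.cosh (2*y-c))) y := (hsh' c y).const_mul (-2)
  have hden : HasDerivAt (fun y : ℝ => Real.cosh (2*y-c)^2)
      (2 * Real.cosh (2*y-c) ^ 1 * (2 * Real.sinh (2*y-c))) y := (hch' c y).pow 2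
  have hd0 : Real.cosh (2*y-c)^2 ≠ 0 := pow_ne_zero _ (hc0' c y)
  have := (hnum.div hden hd0).const_mul a
  convert this using 1
  · rfl
  · rfl
  · rfl
  have h := hc0' c y
  field_simp
  ring

lemma haux2 :
    HasDerivAt (fun y : ℝ => a * ((8 * Real.sinh (2*y-c)^2 - 4 * Real.cosh (2*y-c)^2) / Real.cosh (2*y-c)^3))
      (a * ((40 * Real.sinh (2*y-c) * Real.cosh (2*y-c)^2 - 48 * Real.sinh (2*y-c)^3) / Real.cosh (2*y-c)^4)) y := by
  have hs2 : HasDerivAt (fun y : ℝ => Real.sinh (2*y-c)^2)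
      (2 * Real.sinh (2*y-c) ^ 1 * (2 * Real.cosh (2*y-c))) y := (hsh' c y).pow 2
  have hc2 : HasDerivAt (fun y : ℝ => Real.cosh (2*y-c)^2)
      (2 * Real.cosh (2*y-c) ^ 1 * (2 * Real.sinh (2*y-c))) y := (hch' c y).pow 2
  have hnum : HasDerivAt (fun y : ℝ => 8 * Real.sinh (2*y-c)^2 - 4 * Real.cosh (2*y-c)^2)
      (8 * (2 * Real.sinh (2*y-c) ^ 1 * (2 * Real.cosh (2*y-c)))
        - 4 * (2 * Real.cosh (2*y-c) ^ 1 * (2 * Real.sinh (2*y-c)))) y :=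
    (hs2.const_mul 8).sub (hc2.const_mul 4)
  have hden : HasDerivAt (fun y : ℝ => Real.cosh (2*y-c)^3)
      (3 * Real.cosh (2*y-c) ^ 2 * (2 * Real.sinh (2*y-c))) y := (hch' c y).pow 3
  have hd0 : Real.cosh (2*y-c)^3 ≠ 0 := pow_ne_zero _ (hc0' c y)
  have := (hnum.div hden hd0).const_mul a
  convert this using 1
  · rfl
  · rfl
  · rfl
  have h := hc0' c y
  field_simp
  ring

lemma hauxt (a x k t : ℝ) :
    HasDerivAt (fun s : ℝ => a * (1 / Real.cosh (2*x - 8*s - k)))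
      (a * (8 * Real.sinh (2*x - 8*t - k) / Real.cosh (2*x - 8*t - k)^2)) t := by
  have hw : HasDerivAt (fun s : ℝ => 2*x - 8*s - k) (-8) t := by
    simpa using (((hasDerivAt_id t).const_mul 8).const_sub (2*x)).sub_const k
  have hch : HasDerivAt (fun s : ℝ => Real.cosh (2*x - 8*s - k))
      (Real.sinh (2*x - 8*t - k) * (-8)) t := (Real.hasDerivAt_cosh _).comp t hw
  have hc0 : Real.cosh (2*x - 8*t - k) ≠ 0 := (Real.cosh_pos _).ne'
  have := (hch.inv hc0).const_mul a
  convert this using 1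
  · rfl
  · rfl
  · funext z; simp only [one_div, Pi.inv_apply]
  ring

end aux

lemma mkdv_eq1 (A B x t : ℝ) (hAB : A^2 + B^2 = 4) (k : ℝ) :
    deriv (fun s => A * (1 / Real.cosh (2*x - 8*s - k))) t
      + iteratedDeriv 3 (fun y => A * (1 / Real.cosh (2*y - (8*t + k)))) x
      + 3 * ((deriv (fun y => A * (1 / Real.cosh (2*y - (8*t + k)))) x)
          * (B * (1 / Real.cosh (2*x - (8*t + k)))) ^ 2
        + (A * (1 / Real.cosh (2*x - (8*t + k))))
          * (B * (1 / Real.cosh (2*x - (8*t + k))))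
          * deriv (fun y => B * (1 / Real.cosh (2*y - (8*t + k)))) x
        + 2 * (A * (1 / Real.cosh (2*x - (8*t + k)))) ^ 2
          * deriv (fun y => A * (1 / Real.cosh (2*y - (8*t + k)))) x) = 0 := by
  set c := 8*t + k with hc
  have harg : 2*x - 8*t - k = 2*x - c := by rw [hc]; ring
  have e1 : deriv (fun y => A * (1 / Real.cosh (2*y - c)))
      = fun y => A * (-2 * Real.sinh (2*y-c) / Real.cosh (2*y-c)^2) :=
    funext fun y => (haux0 A c y).deriv
  have e1B : deriv (fun y => B * (1 / Real.cosh (2*y - c)))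
      = fun y => B * (-2 * Real.sinh (2*y-c) / Real.cosh (2*y-c)^2) :=
    funext fun y => (haux0 B c y).deriv
  have e2 : deriv (fun y : ℝ => A * (-2 * Real.sinh (2*y-c) / Real.cosh (2*y-c)^2))
      = fun y => A * ((8 * Real.sinh (2*y-c)^2 - 4 * Real.cosh (2*y-c)^2) / Real.cosh (2*y-c)^3) :=
    funext fun y => (haux1 A c y).deriv
  have e3 : iteratedDeriv 3 (fun y => A * (1 / Real.cosh (2*y - c))) x
      = A * ((40 * Real.sinh (2*x-c) * Real.cosh (2*x-c)^2 - 48 * Real.sinh (2*x-c)^3) / Real.cosh (2*x-c)^4) := by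
    rw [show (3:ℕ) = 2+1 from rfl, iteratedDeriv_succ, show (2:ℕ) = 1+1 from rfl,
      iteratedDeriv_succ, iteratedDeriv_one, e1, e2]
    exact (haux2 A c x).deriv
  have et : deriv (fun s => A * (1 / Real.cosh (2*x - 8*s - k))) t
      = A * (8 * Real.sinh (2*x-c) / Real.cosh (2*x-c)^2) := by
    rw [(hauxt A x k t).deriv, harg]
  rw [et, e3, e1, e1B]
  beta_reduce
  set S := Real.sinh (2*x-c) with hS
  set C := Real.cosh (2*x-c) with hCdef
  have hC : C^2 - S^2 = 1 := Real.cosh_sq_sub_sinh_sq _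
  have hC0 : C ≠ 0 := (Real.cosh_pos _).ne'
  have expand : A * (8 * S / C ^ 2)
      + A * ((40 * S * C ^ 2 - 48 * S ^ 3) / C ^ 4)
      + 3 * (A * (-2 * S / C ^ 2) * (B * (1 / C)) ^ 2
        + A * (1 / C) * (B * (1 / C)) * (B * (-2 * S / C ^ 2))
        + 2 * (A * (1 / C)) ^ 2 * (A * (-2 * S / C ^ 2)))
      = (48*A*S*(C^2-S^2) - 12*A*S*(A^2+B^2)) / C^4 := by
    field_simp
    ring
  rw [expand, hC, hAB]
  norm_num
  exact Or.inl (by ring)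

lemma mkdv_eq2 (A B x t : ℝ) (hAB : A^2 + B^2 = 4) (k : ℝ) :
    deriv (fun s => B * (1 / Real.cosh (2*x - 8*s - k))) t
      + iteratedDeriv 3 (fun y => B * (1 / Real.cosh (2*y - (8*t + k)))) x
      + 3 * ((A * (1 / Real.cosh (2*x - (8*t + k)))) ^ 2
          * deriv (fun y => B * (1 / Real.cosh (2*y - (8*t + k)))) x
        + (A * (1 / Real.cosh (2*x - (8*t + k))))
          * deriv (fun y => A * (1 / Real.cosh (2*y - (8*t + k)))) x
          * (B * (1 / Real.cosh (2*x - (8*t + k))))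
        + 2 * (B * (1 / Real.cosh (2*x - (8*t + k)))) ^ 2
          * deriv (fun y => B * (1 / Real.cosh (2*y - (8*t + k)))) x) = 0 := by
  set c := 8*t + k with hc
  have harg : 2*x - 8*t - k = 2*x - c := by rw [hc]; ring
  have e1 : deriv (fun y => B * (1 / Real.cosh (2*y - c)))
      = fun y => B * (-2 * Real.sinh (2*y-c) / Real.cosh (2*y-c)^2) :=
    funext fun y => (haux0 B c y).deriv
  have e1A : deriv (fun y => A * (1 / Real.cosh (2*y - c)))
      = fun y => A * (-2 * Real.sinh (2*y-c) / Real.cosh (2*y-c)^2) :=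
    funext fun y => (haux0 A c y).deriv
  have e2 : deriv (fun y : ℝ => B * (-2 * Real.sinh (2*y-c) / Real.cosh (2*y-c)^2))
      = fun y => B * ((8 * Real.sinh (2*y-c)^2 - 4 * Real.cosh (2*y-c)^2) / Real.cosh (2*y-c)^3) :=
    funext fun y => (haux1 B c y).deriv
  have e3 : iteratedDeriv 3 (fun y => B * (1 / Real.cosh (2*y - c))) x
      = B * ((40 * Real.sinh (2*x-c) * Real.cosh (2*x-c)^2 - 48 * Real.sinh (2*x-c)^3) / Real.cosh (2*x-c)^4) := by
    rw [show (3:ℕ) = 2+1 from rfl, iteratedDeriv_succ, show (2:ℕ) = 1+1 from rfl,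
      iteratedDeriv_succ, iteratedDeriv_one, e1, e2]
    exact (haux2 B c x).deriv
  have et : deriv (fun s => B * (1 / Real.cosh (2*x - 8*s - k))) t
      = B * (8 * Real.sinh (2*x-c) / Real.cosh (2*x-c)^2) := by
    rw [(hauxt B x k t).deriv, harg]
  rw [et, e3, e1, e1A]
  beta_reduce
  set S := Real.sinh (2*x-c) with hS
  set C := Real.cosh (2*x-c) with hCdef
  have hC : C^2 - S^2 = 1 := Real.cosh_sq_sub_sinh_sq _
  have hC0 : C ≠ 0 := (Real.cosh_pos _).ne'
  have expand : B * (8 * S / C ^ 2)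
      + B * ((40 * S * C ^ 2 - 48 * S ^ 3) / C ^ 4)
      + 3 * ((A * (1 / C)) ^ 2 * (B * (-2 * S / C ^ 2))
        + A * (1 / C) * (A * (-2 * S / C ^ 2)) * (B * (1 / C))
        + 2 * (B * (1 / C)) ^ 2 * (B * (-2 * S / C ^ 2)))
      = (48*B*S*(C^2-S^2) - 12*B*S*(A^2+B^2)) / C^4 := by
    field_simp
    ring
  rw [expand, hC, hAB]
  norm_num
  exact Or.inl (by ring)

/-- the pair `(u,v)` of line solitons satisfies the coupled mKdV
system with `α = −1`:
`u_t + u_{xxx} + 3(u_x v² + u v v_x + 2u² u_x) = 0` and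
`v_t + v_{xxx} + 3(u² v_x + u u_x v + 2v² v_x) = 0`. -/
theorem stmt14 (x t : ℝ) :
    (deriv (fun s => usol x s) t + iteratedDeriv 3 (fun y => usol y t) x
      + 3 * ((deriv (fun y => usol y t) x) * (vsol x t) ^ 2
        + usol x t * vsol x t * deriv (fun y => vsol y t) x
        + 2 * (usol x t) ^ 2 * deriv (fun y => usol y t) x) = 0)
    ∧ (deriv (fun s => vsol x s) t + iteratedDeriv 3 (fun y => vsol y t) x
      + 3 * ((usol x t) ^ 2 * deriv (fun y => vsol y t) x
        + usol x t * deriv (fun y => usol y t) x * vsol x t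
        + 2 * (vsol x t) ^ 2 * deriv (fun y => vsol y t) x) = 0) := by
  set A : ℝ := -(2 * Real.sqrt 3 / 3) with hA
  set B : ℝ := -(2 * Real.sqrt 6 / 3) with hB
  set k : ℝ := Real.log (Real.sqrt 3 / 2) with hk
  have h3 : Real.sqrt 3 ^ 2 = 3 := Real.sq_sqrt (by norm_num)
  have h6 : Real.sqrt 6 ^ 2 = 6 := Real.sq_sqrt (by norm_num)
  have hAB : A^2 + B^2 = 4 := by
    rw [hA, hB]
    nlinarith [h3, h6]
  have hu : (fun y => usol y t) = fun y => A * (1 / Real.cosh (2*y - (8*t + k))) := by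
    funext y
    simp only [usol, hA, hk]
    rw [show 2*y - 8*t - k = 2*y - (8*t + k) by ring]
  have hv : (fun y => vsol y t) = fun y => B * (1 / Real.cosh (2*y - (8*t + k))) := by
    funext y
    simp only [vsol, hB, hk]
    rw [show 2*y - 8*t - k = 2*y - (8*t + k) by ring]
  have hut : (fun s => usol x s) = fun s => A * (1 / Real.cosh (2*x - 8*s - k)) := by
    funext s; simp only [usol, hA, hk]
  have hvt : (fun s => vsol x s) = fun s => B * (1 / Real.cosh (2*x - 8*s - k)) := by
    funext s; simp only [vsol, hB, hk]
  have huv : usol x t = A * (1 / Real.cosh (2*x - (8*t + k))) := by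
    simp only [usol, hA, hk]
    rw [show 2*x - 8*t - k = 2*x - (8*t + k) by ring]
  have hvv : vsol x t = B * (1 / Real.cosh (2*x - (8*t + k))) := by
    simp only [vsol, hB, hk]
    rw [show 2*x - 8*t - k = 2*x - (8*t + k) by ring]
  rw [hu, hv, hut, hvt, huv, hvv]
  exact ⟨mkdv_eq1 A B x t hAB k, mkdv_eq2 A B x t hAB k⟩
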